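/- Let Γ_n be the n×n matrix with entries Γ_{i,j} = (-1)^{n-i} if i + j = n + 1, Γ_{i,j} = (-1)^{n-i} if i + j = n + 2 (i.e., the ±1 anti-bidiagonal pattern with (n,1)-entry 1 and (n,2)-entry 1), and 0 otherwise. Then Γ_n is invertible, and Γ_n Γ_n^{-T} = (-1)^{n+1}(I - 2N + ⋯) is a lower-triangular matrix whose diagonal entries all equal (-1)^{n+1} and whose first subdiagonal entries all equal (-1)^{n+1}·(-2). -/

import Mathlib

open Matrix Finset

private lemma negpow_eq (a b : ℕ) (h : a % 2 = b % 2) : (-1:ℂ)^a = (-1:ℂ)^b := by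
  rw [neg_one_pow_eq_pow_mod_two, h, ← neg_one_pow_eq_pow_mod_two]

theorem gamma_times_inv_transpose_structure (n : ℕ) :
    let Γ : Matrix (Fin n) (Fin n) ℂ :=
      Matrix.of fun i j =>
        if (i : ℕ) + (j : ℕ) + 1 = n ∨ (i : ℕ) + (j : ℕ) = n then
          (-1 : ℂ) ^ (n - 1 - (i : ℕ))
        else 0
    IsUnit Γ ∧
      (let M := Γ * (Γ⁻¹)ᵀ;
        (∀ i j : Fin n, (i : ℕ) < (j : ℕ) → M i j = 0) ∧
        (∀ i : Fin n, M i i = (-1 : ℂ) ^ (n + 1)) ∧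
        (∀ i j : Fin n, (i : ℕ) = (j : ℕ) + 1 → M i j = (-1 : ℂ) ^ n * 2)) := by
  intro Γ
  set B : Matrix (Fin n) (Fin n) ℂ :=
    Matrix.of (fun r c => if (r:ℕ) + (c:ℕ) < n then (-1:ℂ)^(r:ℕ) else 0) with hBdef
  -- generic row-sum lemma
  have rowsum : ∀ (i : Fin n) (f : Fin n → ℂ),
      (∑ j, Γ i j * f j) =
        (-1:ℂ)^(n-1-(i:ℕ)) * (f ⟨n-1-(i:ℕ), by have := i.isLt; omega⟩ +
          if h : 1 ≤ (i:ℕ) then f ⟨n-(i:ℕ), by have := i.isLt; omega⟩ else 0) := by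
    intro i f
    have hi := i.isLt
    by_cases hi1 : 1 ≤ (i:ℕ)
    · set j₁ : Fin n := ⟨n-1-(i:ℕ), by omega⟩ with hj₁
      set j₂ : Fin n := ⟨n-(i:ℕ), by omega⟩ with hj₂
      have hsplit : ∀ j : Fin n, Γ i j * f j =
          (if j = j₁ then (-1:ℂ)^(n-1-(i:ℕ)) * f j else 0) +
          (if j = j₂ then (-1:ℂ)^(n-1-(i:ℕ)) * f j else 0) := by
        intro j
        have hj := j.isLt
        simp only [Γ, Matrix.of_apply, Fin.ext_iff, hj₁, hj₂]
        by_cases h1 : (j:ℕ) = n-1-(i:ℕ)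
        · have : (i:ℕ) + (j:ℕ) + 1 = n ∨ (i:ℕ) + (j:ℕ) = n := by left; omega
          rw [if_pos this, if_pos h1, if_neg (by omega)]
          ring
        · by_cases h2 : (j:ℕ) = n-(i:ℕ)
          · have : (i:ℕ) + (j:ℕ) + 1 = n ∨ (i:ℕ) + (j:ℕ) = n := by right; omega
            rw [if_pos this, if_neg h1, if_pos h2]
            ring
          · rw [if_neg (by omega), if_neg h1, if_neg h2]
            ring
      rw [Finset.sum_congr rfl (fun j _ => hsplit j), Finset.sum_add_distrib,
        Finset.sum_ite_eq' , Finset.sum_ite_eq']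
      simp [hi1, mul_add]
      rfl
    · have hi0 : (i:ℕ) = 0 := by omega
      set j₁ : Fin n := ⟨n-1-(i:ℕ), by omega⟩ with hj₁
      have hsplit : ∀ j : Fin n, Γ i j * f j =
          (if j = j₁ then (-1:ℂ)^(n-1-(i:ℕ)) * f j else 0) := by
        intro j
        have hj := j.isLt
        simp only [Γ, Matrix.of_apply, Fin.ext_iff, hj₁]
        by_cases h1 : (j:ℕ) = n-1-(i:ℕ)
        · have : (i:ℕ) + (j:ℕ) + 1 = n ∨ (i:ℕ) + (j:ℕ) = n := by left; omega
          rw [if_pos this, if_pos h1]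
        · rw [if_neg (by omega), if_neg h1]
          ring
      rw [Finset.sum_congr rfl (fun j _ => hsplit j), Finset.sum_ite_eq']
      simp [hi1]
  -- Γ * B = 1
  have hΓB : Γ * B = 1 := by
    ext i c
    have hi := i.isLt
    have hc := c.isLt
    rw [Matrix.mul_apply, rowsum i (fun j => B j c), Matrix.one_apply]
    by_cases hi1 : 1 ≤ (i:ℕ)
    · rw [dif_pos hi1]
      simp only [hBdef, Matrix.of_apply]
      by_cases h1 : n - 1 - (i:ℕ) + (c:ℕ) < n
      · rw [if_pos h1]
        by_cases h2 : n - (i:ℕ) + (c:ℕ) < n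
        · rw [if_pos h2, if_neg (by rw [Fin.ext_iff]; omega)]
          have he : n - (i:ℕ) = (n - 1 - (i:ℕ)) + 1 := by omega
          rw [he, pow_succ]
          ring
        · rw [if_neg h2, if_pos (by rw [Fin.ext_iff]; omega)]
          rw [add_zero, ← pow_add]
          exact Even.neg_one_pow ⟨_, rfl⟩
      · rw [if_neg h1, if_neg (by omega), if_neg (by rw [Fin.ext_iff]; omega)]
        ring
    · rw [dif_neg hi1]
      simp only [hBdef, Matrix.of_apply]
      by_cases h1 : n - 1 - (i:ℕ) + (c:ℕ) < n
      · rw [if_pos h1, if_pos (by rw [Fin.ext_iff]; omega)]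
        rw [add_zero, ← pow_add]
        exact Even.neg_one_pow ⟨_, rfl⟩
      · rw [if_neg h1, if_neg (by rw [Fin.ext_iff]; omega)]
        ring
  have hunit : IsUnit Γ :=
    ⟨⟨Γ, B, hΓB, mul_eq_one_comm.mp hΓB⟩, rfl⟩
  have hinv : Γ⁻¹ = B := Matrix.inv_eq_right_inv hΓB
  refine ⟨hunit, ?_, ?_, ?_⟩
  · intro i j hij
    have hi := i.isLt
    have hj := j.isLt
    simp only [hinv]
    rw [Matrix.mul_apply]
    simp only [Matrix.transpose_apply]
    rw [rowsum i (fun c => B j c)]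
    simp only [hBdef, Matrix.of_apply]
    rw [if_neg (by omega)]
    by_cases hi1 : 1 ≤ (i:ℕ)
    · rw [dif_pos hi1, if_neg (by omega)]; ring
    · rw [dif_neg hi1]; ring
  · intro i
    have hi := i.isLt
    simp only [hinv]
    rw [Matrix.mul_apply]
    simp only [Matrix.transpose_apply]
    rw [rowsum i (fun c => B i c)]
    simp only [hBdef, Matrix.of_apply]
    rw [if_pos (by omega)]
    have h2 : (if h : 1 ≤ (i:ℕ) then
        (if (i:ℕ) + ((⟨n-(i:ℕ), by omega⟩ : Fin n):ℕ) < n then (-1:ℂ)^(i:ℕ) else 0) else 0) = 0 := by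
      by_cases hi1 : 1 ≤ (i:ℕ)
      · rw [dif_pos hi1, if_neg (by simp only [Fin.val_mk]; omega)]
      · rw [dif_neg hi1]
    rw [h2, add_zero, ← pow_add]
    exact negpow_eq _ _ (by omega)
  · intro i j hij
    have hi := i.isLt
    have hj := j.isLt
    simp only [hinv]
    rw [Matrix.mul_apply]
    simp only [Matrix.transpose_apply]
    rw [rowsum i (fun c => B j c)]
    simp only [hBdef, Matrix.of_apply]
    have hi1 : 1 ≤ (i:ℕ) := by omega
    rw [if_pos (by omega), dif_pos hi1, if_pos (by omega)]
    have : (-1:ℂ)^(n-1-(i:ℕ)) * ((-1:ℂ)^(j:ℕ) + (-1:ℂ)^(j:ℕ)) = (-1:ℂ)^(n-1-(i:ℕ)+(j:ℕ)) * 2 := by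
      rw [pow_add]; ring
    rw [this]
    congr 1
    exact negpow_eq _ _ (by omega)
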